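/- Let T be a finite abelian 2-group and ψ : T → ℚ/ℤ a quadratic 2-linear function. Then the 4-fold orthogonal sum ψ⊥ψ⊥ψ⊥ψ on T⁴ is isometric to (−ψ)⊥(−ψ)⊥(−ψ)⊥(−ψ). Consequently G(ψ)⁴/|G(ψ)|⁴ is a complex conjugate-symmetric quantity and, for ψ tame, 8β(ψ) = 0, i.e. β(ψ) ∈ (1/8)ℤ/ℤ. -/

import Mathlib

def bform {T M : Type*} [AddCommGroup T] [AddCommGroup M] (ψ : T → M) (x y : T) : M :=
  ψ (x + y) - ψ x - ψ y

def IsTwoLinear {T M : Type*} [AddCommGroup T] [AddCommGroup M] (ψ : T → M) : Prop :=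
  ∀ x y z : T, bform ψ (x + y) z = bform ψ x z + bform ψ y z

def IsQuadratic {T : Type*} [AddCommGroup T] (ψ : T → AddCircle (1 : ℚ)) : Prop :=
  ∀ (a : ℤ) (x : T), ψ (a • x) = (a ^ 2) • ψ x

/-- The canonical map `ℚ/ℤ → ℝ/ℤ`. -/
noncomputable def q2r : AddCircle (1 : ℚ) →+ AddCircle (1 : ℝ) :=
  QuotientAddGroup.map (AddSubgroup.zmultiples (1 : ℚ)) (AddSubgroup.zmultiples (1 : ℝ))
    (Rat.castHom ℝ).toAddMonoidHom (by
      intro x hx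
      obtain ⟨n, rfl⟩ := AddSubgroup.mem_zmultiples_iff.mp hx
      exact AddSubgroup.mem_comap.mpr
        (AddSubgroup.mem_zmultiples_iff.mpr ⟨n, by push_cast [zsmul_eq_mul]; norm_num⟩))

/-- `exp (2 π i x)` for `x ∈ ℚ/ℤ`. -/
noncomputable def eQ (x : AddCircle (1 : ℚ)) : ℂ := AddCircle.toCircle (q2r x)

section auxLemmas

variable {T M : Type*} [AddCommGroup T] [AddCommGroup M]

lemma bform_comm (ψ : T → M) (x y : T) : bform ψ x y = bform ψ y x := by
  simp only [bform, add_comm x y]; abel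

/-- The bilinear form of `ψ` as a bundled biadditive map. -/
def bhom (ψ : T → M) (h2 : IsTwoLinear ψ) : T →+ T →+ M :=
  AddMonoidHom.mk' (fun x => AddMonoidHom.mk' (fun y => bform ψ x y)
    (fun y z => by
      show bform ψ x (y + z) = bform ψ x y + bform ψ x z
      rw [bform_comm ψ x (y + z), h2 y z x, bform_comm ψ y x, bform_comm ψ z x]))
    (fun x y => by ext z; exact h2 x y z)

lemma bhom_apply (ψ : T → M) (h2 : IsTwoLinear ψ) (x y : T) :
    bhom ψ h2 x y = bform ψ x y := rfl

lemma psi_add (ψ : T → M) (h2 : IsTwoLinear ψ) (x y : T) :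
    ψ (x + y) = ψ x + ψ y + bhom ψ h2 x y := by
  simp only [bhom_apply, bform]; abel

/-- The 4×4 Connolly (quaternion-multiplication) matrix acting on `T⁴`. -/
def connM (a b c d : ℤ) (v : T × T × T × T) : T × T × T × T :=
  (a • v.1 + b • v.2.1 + c • v.2.2.1 + d • v.2.2.2,
   -(b • v.1) + a • v.2.1 - d • v.2.2.1 + c • v.2.2.2,
   -(c • v.1) + d • v.2.1 + a • v.2.2.1 - b • v.2.2.2,
   -(d • v.1) - c • v.2.1 + b • v.2.2.1 + a • v.2.2.2)

lemma connM_add (a b c d : ℤ) (v w : T × T × T × T) :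
    connM a b c d (v + w) = connM a b c d v + connM a b c d w := by
  simp only [connM, Prod.fst_add, Prod.snd_add, Prod.mk_add_mk, smul_add, Prod.mk.injEq]
  refine ⟨by abel, by abel, by abel, by abel⟩

lemma connM_neg (a b c d : ℤ) (v : T × T × T × T) :
    connM a b c d (-v) = -connM a b c d v := by
  obtain ⟨x, y, z, w⟩ := v
  simp only [connM, Prod.neg_mk, smul_neg, Prod.mk.injEq]
  refine ⟨by abel, by abel, by abel, by abel⟩

lemma connM_conj (a b c d : ℤ) (v : T × T × T × T) :
    connM a (-b) (-c) (-d) (connM a b c d v) = (a^2 + b^2 + c^2 + d^2) • v := by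
  obtain ⟨x, y, z, w⟩ := v
  simp only [connM, Prod.smul_mk, Prod.mk.injEq]
  refine ⟨by module, by module, by module, by module⟩

lemma connM_conj' (a b c d : ℤ) (v : T × T × T × T) :
    connM a b c d (connM a (-b) (-c) (-d) v) = (a^2 + b^2 + c^2 + d^2) • v := by
  obtain ⟨x, y, z, w⟩ := v
  simp only [connM, Prod.smul_mk, Prod.mk.injEq]
  refine ⟨by module, by module, by module, by module⟩

/-- Key computation: applying `ψ` summed over the coordinates of `connM a b c d v`
gives `(a²+b²+c²+d²)` times the original sum; all cross terms cancel. -/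
lemma connM_psi (ψ : T → M) (h2 : IsTwoLinear ψ)
    (hq : ∀ (a : ℤ) (x : T), ψ (a • x) = (a ^ 2) • ψ x) (a b c d : ℤ) (v : T × T × T × T) :
    ψ (connM a b c d v).1 + ψ (connM a b c d v).2.1 + ψ (connM a b c d v).2.2.1 +
      ψ (connM a b c d v).2.2.2 =
    (a^2 + b^2 + c^2 + d^2) • (ψ v.1 + ψ v.2.1 + ψ v.2.2.1 + ψ v.2.2.2) := by
  obtain ⟨x, y, z, w⟩ := v
  simp only [connM, sub_eq_add_neg, ← neg_smul]
  simp only [psi_add ψ h2, hq, map_add, map_zsmul, map_neg, AddMonoidHom.add_apply,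
    AddMonoidHom.neg_apply, AddMonoidHom.smul_apply]
  module

lemma eQ_add (x y : AddCircle (1 : ℚ)) : eQ (x + y) = eQ x * eQ y := by
  unfold eQ
  rw [map_add, AddCircle.toCircle_add, Circle.coe_mul]

lemma eQ_neg (x : AddCircle (1 : ℚ)) : eQ (-x) = (starRingEnd ℂ) (eQ x) := by
  unfold eQ
  rw [map_neg]
  have h1 : AddCircle.toCircle (-(q2r x)) = (AddCircle.toCircle (q2r x))⁻¹ := by
    apply eq_inv_of_mul_eq_one_left
    rw [← AddCircle.toCircle_add]
    simp
  rw [h1, Circle.coe_inv_eq_conj]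

lemma sum_pow_four {T : Type*} [Fintype T] (f : T → ℂ) :
    (∑ t : T, f t) ^ 4 = ∑ v : T × T × T × T, f v.1 * f v.2.1 * f v.2.2.1 * f v.2.2.2 := by
  simp only [Fintype.sum_prod_type]
  rw [show ((∑ t : T, f t) ^ 4) =
      (∑ t : T, f t) * (∑ t : T, f t) * (∑ t : T, f t) * (∑ t : T, f t) by ring]
  simp only [Finset.sum_mul, Finset.mul_sum]
  exact Finset.sum_congr rfl fun _ _ => Finset.sum_congr rfl fun _ _ =>
    Finset.sum_congr rfl fun _ _ => Finset.sum_congr rfl fun _ _ => by ring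

end auxLemmas

/-- For a quadratic 2-linear `ψ` on a finite abelian 2-group `T`, the 4-fold sum
`ψ⊥ψ⊥ψ⊥ψ` is isometric to `(-ψ)⊥(-ψ)⊥(-ψ)⊥(-ψ)`.  Consequently
`G(ψ)⁴ = conj(G(ψ))⁴`, and if `ψ` is tame then `8 β(ψ) = 0`, i.e.
`G(ψ)⁸ = |G(ψ)|⁸`. -/
theorem connolly_two_group {T : Type*} [AddCommGroup T] [Fintype T]
    (hT : ∀ x : T, ∃ n : ℕ, 2 ^ n • x = 0)
    (ψ : T → AddCircle (1 : ℚ)) (h2 : IsTwoLinear ψ) (hq : IsQuadratic ψ) :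
    (∃ h : T × T × T × T ≃+ T × T × T × T,
        ∀ z : T × T × T × T,
          -ψ (h z).1 + -ψ (h z).2.1 + -ψ (h z).2.2.1 + -ψ (h z).2.2.2 =
            ψ z.1 + ψ z.2.1 + ψ z.2.2.1 + ψ z.2.2.2) ∧
      (∑ t : T, eQ (ψ t)) ^ 4 = (starRingEnd ℂ) (∑ t : T, eQ (ψ t)) ^ 4 ∧
      ((∀ t : T, (∀ s : T, bform ψ t s = 0) → ψ t = 0) →
        (∑ t : T, eQ (ψ t)) ^ 8 = (‖∑ t : T, eQ (ψ t)‖ : ℂ) ^ 8) := by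
  classical
  -- a uniform exponent 2^ℓ annihilating T
  obtain ⟨ℓ, hℓ⟩ : ∃ ℓ : ℕ, ∀ x : T, (2 : ℕ) ^ ℓ • x = 0 := by
    choose n hn using hT
    refine ⟨Finset.univ.sup n, fun x => ?_⟩
    have hle : n x ≤ Finset.univ.sup n := Finset.le_sup (Finset.mem_univ x)
    have : (2 : ℕ) ^ Finset.univ.sup n = 2 ^ (Finset.univ.sup n - n x) * 2 ^ n x := by
      rw [← pow_add]; congr 1; omega
    rw [this, mul_smul, hn, smul_zero]
  have hℓZ : ∀ x : T, ((2 : ℤ) ^ ℓ) • x = 0 := by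
    intro x
    rw [show ((2 : ℤ) ^ ℓ) = ((2 ^ ℓ : ℕ) : ℤ) by push_cast; ring, natCast_zsmul]
    exact hℓ x
  -- 2^(ℓ+1) annihilates the values of ψ
  have hbtt : ∀ t : T, bhom ψ h2 t t = (2 : ℤ) • ψ t := by
    intro t
    have h4 : ψ (t + t) = (4 : ℤ) • ψ t := by
      rw [← two_zsmul, hq]; norm_num
    rw [bhom_apply, bform, h4]
    module
  have key : ∀ t : T, ((2 : ℤ) ^ (ℓ + 1)) • ψ t = 0 := by
    intro t
    have h1 : ((2 : ℤ) ^ (ℓ + 1)) • ψ t = (2 : ℤ) ^ ℓ • ((2 : ℤ) • ψ t) := by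
      rw [smul_smul, pow_succ]
    have h2' : bhom ψ h2 ((2 : ℤ) ^ ℓ • t) t = (2 : ℤ) ^ ℓ • bhom ψ h2 t t := by
      rw [map_zsmul, AddMonoidHom.smul_apply]
    rw [h1, ← hbtt, ← h2', hℓZ, map_zero, AddMonoidHom.zero_apply]
  -- four squares representation of 2^(ℓ+1) - 1
  obtain ⟨a, b, c, d, habcd⟩ := Nat.sum_four_squares (2 ^ (ℓ + 1) - 1)
  set A : ℤ := (a : ℤ) with hA
  set B : ℤ := (b : ℤ) with hB
  set C : ℤ := (c : ℤ) with hC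
  set D : ℤ := (d : ℤ) with hD
  have h2p : 1 ≤ 2 ^ (ℓ + 1) := Nat.one_le_two_pow
  have hsum1 : a ^ 2 + b ^ 2 + c ^ 2 + d ^ 2 + 1 = 2 ^ (ℓ + 1) := by omega
  have hN : A ^ 2 + B ^ 2 + C ^ 2 + D ^ 2 = 2 ^ (ℓ + 1) - 1 := by
    have := congrArg (fun n : ℕ => (n : ℤ)) hsum1
    push_cast at this
    rw [hA, hB, hC, hD]; linarith
  -- N • ψ t = -ψ t  and  N • x = -x
  have hneg : ∀ t : T, (A ^ 2 + B ^ 2 + C ^ 2 + D ^ 2) • ψ t = -ψ t := by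
    intro t
    rw [hN, sub_smul, key t, one_smul, zero_sub]
  have hℓZ' : ∀ x : T, ((2 : ℤ) ^ (ℓ + 1)) • x = 0 := by
    intro x
    rw [show ((2 : ℤ) ^ (ℓ + 1)) = 2 * 2 ^ ℓ by ring, mul_smul, hℓZ, smul_zero]
  have hnegT : ∀ v : T × T × T × T, (A ^ 2 + B ^ 2 + C ^ 2 + D ^ 2) • v = -v := by
    intro v
    have hx : ∀ x : T, (A ^ 2 + B ^ 2 + C ^ 2 + D ^ 2) • x = -x := by
      intro x
      rw [hN, sub_smul, hℓZ' x, one_smul, zero_sub]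
    obtain ⟨x, y, z, w⟩ := v
    simp only [Prod.smul_mk, Prod.neg_mk, hx]
  -- the isometry
  let h : T × T × T × T ≃+ T × T × T × T :=
    AddEquiv.mk' ⟨connM A B C D, fun v => -connM A (-B) (-C) (-D) v,
      fun v => by
        show -connM A (-B) (-C) (-D) (connM A B C D v) = v
        rw [connM_conj, hnegT, neg_neg],
      fun v => by
        show connM A B C D (-connM A (-B) (-C) (-D) v) = v
        rw [connM_neg, connM_conj', hnegT, neg_neg]⟩
      (connM_add A B C D)
  have hhz : ∀ z : T × T × T × T, h z = connM A B C D z := fun _ => rfl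
  have hiso : ∀ z : T × T × T × T,
      -ψ (h z).1 + -ψ (h z).2.1 + -ψ (h z).2.2.1 + -ψ (h z).2.2.2 =
        ψ z.1 + ψ z.2.1 + ψ z.2.2.1 + ψ z.2.2.2 := by
    intro z
    have hs : ψ (h z).1 + ψ (h z).2.1 + ψ (h z).2.2.1 + ψ (h z).2.2.2 =
        -(ψ z.1 + ψ z.2.1 + ψ z.2.2.1 + ψ z.2.2.2) := by
      rw [hhz, connM_psi ψ h2 hq]
      simp only [smul_add, hneg]
      abel
    calc -ψ (h z).1 + -ψ (h z).2.1 + -ψ (h z).2.2.1 + -ψ (h z).2.2.2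
        = -(ψ (h z).1 + ψ (h z).2.1 + ψ (h z).2.2.1 + ψ (h z).2.2.2) := by abel
      _ = ψ z.1 + ψ z.2.1 + ψ z.2.2.1 + ψ z.2.2.2 := by rw [hs, neg_neg]
  -- the Gauss sum identity
  set G : ℂ := ∑ t : T, eQ (ψ t) with hG
  have hpart2 : G ^ 4 = (starRingEnd ℂ) G ^ 4 := by
    have hconj : (starRingEnd ℂ) G = ∑ t : T, eQ (-ψ t) := by
      rw [hG, map_sum]
      exact Finset.sum_congr rfl fun t _ => (eQ_neg (ψ t)).symm
    have hL : G ^ 4 = ∑ v : T × T × T × T,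
        eQ (ψ v.1 + ψ v.2.1 + ψ v.2.2.1 + ψ v.2.2.2) := by
      rw [hG, sum_pow_four]
      exact Finset.sum_congr rfl fun v _ => by rw [eQ_add, eQ_add, eQ_add]
    have hR : (starRingEnd ℂ) G ^ 4 = ∑ v : T × T × T × T,
        eQ (-ψ v.1 + -ψ v.2.1 + -ψ v.2.2.1 + -ψ v.2.2.2) := by
      rw [hconj, sum_pow_four]
      exact Finset.sum_congr rfl fun v _ => by rw [eQ_add, eQ_add, eQ_add]
    rw [hL, hR]
    rw [← Equiv.sum_comp h.toEquiv
      (fun v => eQ (-ψ v.1 + -ψ v.2.1 + -ψ v.2.2.1 + -ψ v.2.2.2))]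
    exact Finset.sum_congr rfl fun v _ => by rw [show h.toEquiv v = h v from rfl, hiso]
  refine ⟨⟨h, hiso⟩, hpart2, fun _ => ?_⟩
  have habs : G * (starRingEnd ℂ) G = (‖G‖ : ℂ) ^ 2 := by
    rw [Complex.mul_conj, ← Complex.sq_norm]
    push_cast
    ring
  calc G ^ 8 = G ^ 4 * G ^ 4 := by ring
    _ = G ^ 4 * (starRingEnd ℂ) G ^ 4 := by rw [← hpart2]
    _ = (G * (starRingEnd ℂ) G) ^ 4 := by ring
    _ = ((‖G‖ : ℂ) ^ 2) ^ 4 := by rw [habs]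
    _ = (‖G‖ : ℂ) ^ 8 := by ring
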